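/- Let H be a Hilbert space and S(t) a strongly continuous semigroup of bounded operators on H. Suppose B : H → H is bounded and linear, and K := ker B is invariant under every S(t). Suppose further that for every x₀ ∈ K there exists T(x₀) ≥ 0 such that S(t)x₀ = 0 for all t ≥ T(x₀). Then the restricted semigroup S(t)|_K is nilpotent: there exists n₀ ∈ ℕ such that (S(1)|_K)^{n₀} = 0, i.e., S(n₀)x = 0 for all x ∈ K. -/

import Mathlib

/-- If `ker B` is invariant under a semigroup `S(t)` on a Banach (Hilbert) space
and every trajectory starting in `ker B` vanishes after some finite time, then
the restricted semigroup is nilpotent: `S(n₀) x = 0` for all `x ∈ ker B`. -/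
theorem stmt_11 {H : Type*} [NormedAddCommGroup H] [NormedSpace ℝ H]
    [CompleteSpace H]
    (S : ℝ → H →L[ℝ] H)
    (hS0 : S 0 = ContinuousLinearMap.id ℝ H)
    (hSsem : ∀ s t : ℝ, 0 ≤ s → 0 ≤ t → S (s + t) = (S s).comp (S t))
    (B : H →L[ℝ] H)
    (hinv : ∀ t : ℝ, 0 ≤ t → ∀ x : H, B x = 0 → B (S t x) = 0)
    (hFTS : ∀ x : H, B x = 0 → ∃ T : ℝ, 0 ≤ T ∧ ∀ t : ℝ, T ≤ t → S t x = 0) :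
    ∃ n₀ : ℕ, ∀ x : H, B x = 0 → S (n₀ : ℝ) x = 0 := by
  classical
  set K : Submodule ℝ H := LinearMap.ker (B : H →ₗ[ℝ] H) with hK
  haveI : CompleteSpace K := (ContinuousLinearMap.isClosed_ker B).completeSpace_coe
  haveI : BaireSpace K := BaireSpace.of_completelyPseudoMetrizable
  set F : ℕ → Submodule ℝ K := fun n => LinearMap.ker (((S n).comp K.subtypeL : K →L[ℝ] H) : K →ₗ[ℝ] H)
    with hF
  have hclosed : ∀ n, IsClosed (F n : Set K) := fun n =>
    ContinuousLinearMap.isClosed_ker _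
  have hcover : (⋃ n, (F n : Set K)) = Set.univ := by
    ext x
    simp only [Set.mem_iUnion, Set.mem_univ, iff_true]
    obtain ⟨T, hT0, hT⟩ := hFTS x.1 (LinearMap.mem_ker.mp x.2)
    refine ⟨⌈T⌉₊, ?_⟩
    have := hT _ (Nat.le_ceil T)
    simp only [hF, SetLike.mem_coe, LinearMap.mem_ker,
      ContinuousLinearMap.coe_comp', Function.comp_apply,
      Submodule.coe_subtypeL', Submodule.coe_subtype]
    exact this
  obtain ⟨n, hn⟩ := nonempty_interior_of_iUnion_of_closed hclosed hcover
  have htop : F n = ⊤ := Submodule.eq_top_of_nonempty_interior' _ hn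
  refine ⟨n, fun x hx => ?_⟩
  have hmem : (⟨x, hx⟩ : K) ∈ F n := htop ▸ Submodule.mem_top
  simpa [hF] using hmem
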